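/- Define φ : ℝ → ℝ by φ(s) = −1/(4π) for s < −π/2, φ(s) = (1/(4π)) sin s for −π/2 ≤ s ≤ π/2, and φ(s) = 1/(4π) for s > π/2. Then for all real z₁, z₂, (2.75 z₁ + 0.5 z₂)·z₂ + (0.5 z₁ + 0.375 z₂)·(−2 z₁ − 4 z₂ − φ(z₁)) ≤ −0.5 (z₁² + z₂²). Equivalently, the function V(z₁,z₂) = 1.375 z₁² + 0.1875 z₂² + 0.5 z₁ z₂ satisfies the Lyapunov inequality (∂V/∂z₁) z₂ + (∂V/∂z₂) f(z₁,z₂) ≤ −W(z₁,z₂) with f(z₁,z₂) = −2 z₁ − 4 z₂ − φ(z₁) and W(z₁,z₂) = 0.5 z₁² + 0.5 z₂². -/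
import Mathlib

/-- The saturation function `φ`: equal to `(1/(4π)) sin s` on `[−π/2, π/2]`,
constant `−1/(4π)` on `(−∞, −π/2)` and `1/(4π)` on `(π/2, ∞)`. -/
noncomputable def phiSat (s : ℝ) : ℝ :=
  if s < -(Real.pi / 2) then -(1 / (4 * Real.pi))
  else if s ≤ Real.pi / 2 then (1 / (4 * Real.pi)) * Real.sin s
  else 1 / (4 * Real.pi)

lemma phiSat_mul_nonneg (s : ℝ) : 0 ≤ s * phiSat s := by
  have hpi := Real.pi_gt_three
  have h4 : (0:ℝ) < 1 / (4 * Real.pi) := by positivity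
  unfold phiSat
  split_ifs with h1 h2
  · exact mul_nonneg_of_nonpos_of_nonpos (by linarith : s ≤ 0) (by linarith)
  · rcases le_or_gt 0 s with hs | hs
    · have := Real.sin_nonneg_of_nonneg_of_le_pi hs (by linarith)
      exact mul_nonneg hs (mul_nonneg h4.le this)
    · have := Real.sin_nonpos_of_nonpos_of_neg_pi_le (le_of_lt hs) (by linarith)
      exact mul_nonneg_of_nonpos_of_nonpos hs.le (mul_nonpos_of_nonneg_of_nonpos h4.le this)
  · exact mul_nonneg (by linarith) h4.le

lemma phiSat_abs_le (s : ℝ) : |phiSat s| ≤ |s| / 12 := by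
  have hpi := Real.pi_gt_three
  have hpi2 : Real.pi < 3.15 := by
    have := Real.pi_lt_d2; linarith
  unfold phiSat
  split_ifs with h1 h2
  · rw [abs_neg, abs_of_nonneg (by positivity)]
    have hs : Real.pi / 2 ≤ |s| := by
      rw [abs_of_nonpos (by linarith)]; linarith
    rw [div_le_div_iff₀ (by positivity) (by norm_num)]
    nlinarith
  · rw [abs_mul, abs_of_nonneg (by positivity : (0:ℝ) ≤ 1 / (4 * Real.pi))]
    have := Real.abs_sin_le_abs (x := s)
    have h4 : 1 / (4 * Real.pi) ≤ 1 / 12 := by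
      rw [div_le_div_iff₀ (by positivity) (by norm_num)]; nlinarith
    have habs : (0:ℝ) ≤ |s| := abs_nonneg s
    calc 1 / (4 * Real.pi) * |Real.sin s| ≤ 1 / 12 * |s| := by
          apply mul_le_mul h4 this (abs_nonneg _) (by norm_num)
      _ = |s| / 12 := by ring
  · rw [abs_of_nonneg (by positivity)]
    have hs : Real.pi / 2 ≤ |s| := by
      rw [abs_of_nonneg (by linarith)]; linarith
    rw [div_le_div_iff₀ (by positivity) (by norm_num)]
    nlinarith

theorem lyapunov_inequality_nonlinear_td :
    ∀ z1 z2 : ℝ,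
      (2.75 * z1 + 0.5 * z2) * z2
        + (0.5 * z1 + 0.375 * z2) * (-2 * z1 - 4 * z2 - phiSat z1)
        ≤ -0.5 * (z1 ^ 2 + z2 ^ 2) := by
  intro z1 z2
  have h1 := phiSat_mul_nonneg z1
  have h2 := phiSat_abs_le z1
  have h3 := abs_nonneg z1
  have h4 := abs_nonneg z2
  have h5 : phiSat z1 ≤ |z1| / 12 := (abs_le.mp h2).2
  have h6 : -(|z1| / 12) ≤ phiSat z1 := (abs_le.mp h2).1
  have h7 : z2 ≤ |z2| := le_abs_self z2
  have h8 : -z2 ≤ |z2| := neg_le_abs z2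
  have h9 : |z1|^2 = z1^2 := sq_abs z1
  have h10 : |z2|^2 = z2^2 := sq_abs z2
  nlinarith [sq_nonneg (|z1| - |z2|), sq_nonneg (z1 + z2), sq_nonneg (z1 - z2), mul_nonneg h3 h4]
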